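/- For every high-multiplicity scheduling instance on identical machines there exists a schedule x* that minimizes Cmax (i.e., Cmax(x*) ≤ Cmax(x) for every schedule x) and has gap size at most pmax, i.e., x* i₁ j ≤ x* i₂ j + pmax for all machines i₁, i₂ and all job types j. -/
import Mathlib


/-- A schedule assigns `x i j` jobs of type `j` to machine `i`, placing all `n j` jobs. -/
def IsSchedule {m d : ℕ} (n : Fin d → ℕ) (x : Fin m → Fin d → ℕ) : Prop :=
  ∀ j, ∑ i, x i j = n j

/-- The load of machine `i` under schedule `x`. -/
def load {m d : ℕ} (p : Fin d → ℕ) (x : Fin m → Fin d → ℕ) (i : Fin m) : ℕ :=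
  ∑ j, x i j * p j

/-- The makespan: the maximum machine load. -/
def Cmax {m d : ℕ} (p : Fin d → ℕ) (x : Fin m → Fin d → ℕ) : ℕ :=
  Finset.univ.sup (load p x)

/-- The minimum machine load. -/
noncomputable def Cmin {m d : ℕ} (p : Fin d → ℕ) (x : Fin m → Fin d → ℕ) : ℕ :=
  sInf (Set.range (load p x))

/-- The envy value: maximum load minus minimum load. -/
noncomputable def Cenvy {m d : ℕ} (p : Fin d → ℕ) (x : Fin m → Fin d → ℕ) : ℕ :=
  Cmax p x - Cmin p x

namespace GapProof

def Phi {m d : ℕ} (x : Fin m → Fin d → ℕ) : ℕ := ∑ i, ∑ j, (x i j)^2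




noncomputable def chain {d : ℕ} (c : Fin d → ℕ) : ℕ → Fin d → ℕ
  | 0 => fun _ => 0
  | (k+1) =>
      if h : ∃ j, chain c k j < c j then
        Function.update (chain c k) h.choose (chain c k h.choose + 1)
      else chain c k

lemma chain_le {d : ℕ} (c : Fin d → ℕ) : ∀ k j, chain c k j ≤ c j := by
  intro k
  induction k with
  | zero => intro j; simp [chain]
  | succ k ih =>
    intro j
    by_cases h : ∃ j, chain c k j < c j
    · simp only [chain, dif_pos h]
      rcases eq_or_ne j h.choose with rfl | hne
      · rw [Function.update_self]; exact h.choose_spec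
      · rw [Function.update_of_ne hne]; exact ih j
    · simp only [chain, dif_neg h]; exact ih j

lemma chain_mono_step {d : ℕ} (c : Fin d → ℕ) (k : ℕ) (j : Fin d) :
    chain c k j ≤ chain c (k+1) j := by
  by_cases h : ∃ j, chain c k j < c j
  · simp only [chain, dif_pos h]
    rcases eq_or_ne j h.choose with rfl | hne
    · rw [Function.update_self]; omega
    · rw [Function.update_of_ne hne]
  · simp only [chain, dif_neg h]; exact le_refl _

lemma chain_mono_add {d : ℕ} (c : Fin d → ℕ) (k r : ℕ) (j : Fin d) :
    chain c k j ≤ chain c (k + r) j := by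
  induction r with
  | zero => exact le_refl _
  | succ r ih => exact le_trans ih (chain_mono_step c (k + r) j)

lemma chain_mono {d : ℕ} (c : Fin d → ℕ) {k l : ℕ} (h : k ≤ l) (j : Fin d) :
    chain c k j ≤ chain c l j := by
  have := chain_mono_add c k (l - k) j
  rwa [show k + (l - k) = l by omega] at this

noncomputable def W {d : ℕ} (p c : Fin d → ℕ) (k : ℕ) : ℕ := ∑ j, chain c k j * p j

lemma W_succ_of {d : ℕ} (p c : Fin d → ℕ) (k : ℕ) (h : ∃ j, chain c k j < c j) :
    W p c (k+1) = W p c k + p h.choose := by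
  have hch : chain c (k+1)
      = Function.update (chain c k) h.choose (chain c k h.choose + 1) := by
    simp only [chain, dif_pos h]
  have hpt : ∀ j, Function.update (chain c k) h.choose (chain c k h.choose + 1) j * p j
      = chain c k j * p j + (if j = h.choose then p j else 0) := by
    intro j
    rcases eq_or_ne j h.choose with rfl | hne
    · rw [Function.update_self]; simp [add_mul]
    · rw [Function.update_of_ne hne]; simp [hne]
  unfold W
  rw [hch, Finset.sum_congr rfl fun j _ => hpt j, Finset.sum_add_distrib,
    Finset.sum_ite_eq' Finset.univ h.choose (fun j => p j)]
  simp

lemma exists_of_W_lt {d : ℕ} (p c : Fin d → ℕ) (k : ℕ)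
    (h : W p c k < ∑ j, c j * p j) : ∃ j, chain c k j < c j := by
  by_contra hn
  push_neg at hn
  have : ∀ j, chain c k j = c j := fun j => le_antisymm (chain_le c k j) (hn j)
  have : W p c k = ∑ j, c j * p j := Finset.sum_congr rfl fun j _ => by rw [this j]
  omega

lemma W_le {d : ℕ} (p c : Fin d → ℕ) (P : ℕ) (hpP : ∀ j, p j ≤ P) :
    ∀ k, W p c k ≤ k * P := by
  intro k
  induction k with
  | zero => simp [W, chain]
  | succ k ih =>
    by_cases h : ∃ j, chain c k j < c j
    · rw [W_succ_of p c k h]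
      have := hpP h.choose
      nlinarith
    · have : W p c (k+1) = W p c k := by
        unfold W; simp only [chain, dif_neg h]
      rw [this]; nlinarith

lemma W_add_le {d : ℕ} (p c : Fin d → ℕ) (P : ℕ) (hpP : ∀ j, p j ≤ P) (k : ℕ) :
    ∀ r, W p c (k + r) ≤ W p c k + r * P := by
  intro r
  induction r with
  | zero => simp
  | succ r ih =>
    rw [show k + (r+1) = (k+r) + 1 by omega]
    by_cases h : ∃ j, chain c (k+r) j < c j
    · rw [W_succ_of p c (k+r) h]
      have := hpP h.choose
      nlinarith
    · have : W p c ((k+r)+1) = W p c (k+r) := by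
        unfold W; simp only [chain, dif_neg h]
      rw [this]; nlinarith

lemma W_strict {d : ℕ} (p c : Fin d → ℕ) (hp1 : ∀ j, 1 ≤ p j) (k : ℕ)
    (h : W p c k < ∑ j, c j * p j) : W p c k < W p c (k+1) := by
  have hex := exists_of_W_lt p c k h
  rw [W_succ_of p c k hex]
  have := hp1 hex.choose
  omega

lemma exists_subsum_multiple {d : ℕ} (p c : Fin d → ℕ) (P q : ℕ)
    (hp1 : ∀ j, 1 ≤ p j) (hpP : ∀ j, p j ≤ P) (hq : 1 ≤ q)
    (h : P * q < ∑ j, c j * p j) :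
    ∃ t : Fin d → ℕ, (∀ j, t j ≤ c j) ∧
      ∃ s, 1 ≤ s ∧ s ≤ P ∧ ∑ j, t j * p j = s * q := by
  classical
  have hWlt : ∀ k, k ≤ q → W p c k < ∑ j, c j * p j := by
    intro k hk
    calc W p c k ≤ k * P := W_le p c P hpP k
    _ ≤ q * P := by exact Nat.mul_le_mul_right P hk
    _ < ∑ j, c j * p j := by rw [Nat.mul_comm]; exact h
  have hmono : ∀ l, ∀ k, k < l → l ≤ q → W p c k < W p c l := by
    intro l
    induction l with
    | zero => omega
    | succ l ih =>
      intro k hk hlq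
      have hstep : W p c l < W p c (l+1) := W_strict p c hp1 l (hWlt l (by omega))
      rcases Nat.lt_succ_iff_lt_or_eq.mp hk with h' | rfl
      · exact lt_trans (ih k h' (by omega)) hstep
      · exact hstep
  -- pigeonhole on residues
  have main : ∀ k l, k < l → l ≤ q → W p c k % q = W p c l % q →
      ∃ t : Fin d → ℕ, (∀ j, t j ≤ c j) ∧
        ∃ s, 1 ≤ s ∧ s ≤ P ∧ ∑ j, t j * p j = s * q := by
    intro k l hkl hl heq
    have hWkl : W p c k < W p c l := hmono l k hkl hl
    have hdvd : q ∣ W p c l - W p c k :=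
      (Nat.modEq_iff_dvd' (le_of_lt hWkl)).mp heq
    obtain ⟨s, hs⟩ := hdvd
    refine ⟨fun j => chain c l j - chain c k j,
      fun j => le_trans (Nat.sub_le _ _) (chain_le c l j), s, ?_, ?_, ?_⟩
    · rcases Nat.eq_zero_or_pos s with rfl | h1
      · omega
      · exact h1
    · have hb : W p c l ≤ W p c k + (l - k) * P := by
        have := W_add_le p c P hpP k (l - k)
        rwa [show k + (l - k) = l by omega] at this
      have h2 : q * s ≤ (l - k) * P := by omega
      have hlk : l - k ≤ q := by omega
      have h3 : q * s ≤ q * P := by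
        calc q * s ≤ (l-k) * P := h2
        _ ≤ q * P := Nat.mul_le_mul_right P hlk
      exact Nat.le_of_mul_le_mul_left h3 hq
    · have hpt : ∀ j : Fin d, (chain c l j - chain c k j) * p j + chain c k j * p j
          = chain c l j * p j := by
        intro j
        rw [← add_mul, Nat.sub_add_cancel (chain_mono c (le_of_lt hkl) j)]
      have hsum : (∑ j, (chain c l j - chain c k j) * p j) + W p c k = W p c l := by
        unfold W
        rw [← Finset.sum_add_distrib]
        exact Finset.sum_congr rfl fun j _ => hpt j
      rw [Nat.mul_comm] at hs
      show (∑ j, (chain c l j - chain c k j) * p j) = s * q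
      omega
  obtain ⟨k, hk, l, hl, hne, heq⟩ :=
    Finset.exists_ne_map_eq_of_card_lt_of_maps_to
      (s := Finset.range (q+1)) (t := Finset.range q)
      (by simp) (fun a _ => Finset.mem_range.mpr (Nat.mod_lt _ hq)) (f := fun k => W p c k % q)
  simp only [Finset.mem_range] at hk hl
  rcases lt_or_gt_of_ne hne with hkl | hkl
  · exact main k l hkl (by omega) heq
  · exact main l k hkl (by omega) heq.symm



lemma sum_two_update {m : ℕ} (f : Fin m → ℕ) (i₁ i₂ : Fin m) (h : i₁ ≠ i₂) (a b : ℕ) :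
    (∑ i, (if i = i₁ then a else if i = i₂ then b else f i)) + (f i₁ + f i₂)
      = (∑ i, f i) + (a + b) := by
  classical
  have h1 : ∀ i, (if i = i₁ then a else if i = i₂ then b else f i)
      = Function.update (Function.update f i₁ a) i₂ b i := by
    intro i
    rcases eq_or_ne i i₁ with rfl | hi1
    · rw [Function.update_of_ne h, Function.update_self, if_pos rfl]
    · rcases eq_or_ne i i₂ with rfl | hi2
      · rw [Function.update_self, if_neg hi1, if_pos rfl]
      · rw [Function.update_of_ne hi2, Function.update_of_ne hi1,
          if_neg hi1, if_neg hi2]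
  rw [Finset.sum_congr rfl fun i _ => h1 i]
  have hm1 : i₁ ∈ Finset.univ \ {i₂} := by simp [h]
  rw [Finset.sum_update_of_mem (Finset.mem_univ i₂)]
  rw [Finset.sum_update_of_mem hm1]
  have e1 : ∑ i ∈ Finset.univ \ {i₂}, f i
      = ∑ i ∈ (Finset.univ \ {i₂}) \ {i₁}, f i + f i₁ :=
    Finset.sum_eq_sum_sdiff_singleton_add hm1 f
  have e2 : ∑ i, f i = ∑ i ∈ Finset.univ \ {i₂}, f i + f i₂ :=
    Finset.sum_eq_sum_sdiff_singleton_add (Finset.mem_univ i₂) f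
  omega

lemma improve {m d : ℕ} (p : Fin d → ℕ) (n : Fin d → ℕ)
    (x : Fin m → Fin d → ℕ) (hx : IsSchedule n x) (i₁ i₂ : Fin m) (hne : i₁ ≠ i₂)
    (j₀ : Fin d) (s : ℕ) (t : Fin d → ℕ) (hs1 : 1 ≤ s)
    (hsx : s ≤ x i₁ j₀) (ht : ∀ j, t j ≤ x i₂ j) (ht0 : t j₀ = 0)
    (hgap : ∀ j, t j = 0 ∨ x i₁ j + t j ≤ x i₂ j)
    (hgap0 : x i₂ j₀ + s < x i₁ j₀) :
    ∃ x' : Fin m → Fin d → ℕ, IsSchedule n x' ∧ Phi x' < Phi x ∧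
      (load p x' i₁ + s * p j₀ = load p x i₁ + ∑ j, t j * p j) ∧
      (load p x' i₂ + ∑ j, t j * p j = load p x i₂ + s * p j₀) ∧
      (∀ i, i ≠ i₁ → i ≠ i₂ → load p x' i = load p x i) := by
  classical
  set v₁ : Fin d → ℕ := fun j => if j = j₀ then x i₁ j₀ - s else x i₁ j + t j with hv₁
  set v₂ : Fin d → ℕ := fun j => if j = j₀ then x i₂ j₀ + s else x i₂ j - t j with hv₂
  set x' : Fin m → Fin d → ℕ :=
    fun i j => if i = i₁ then v₁ j else if i = i₂ then v₂ j else x i j with hx'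
  have hx'i₁ : x' i₁ = v₁ := by funext j; simp [hx']
  have hx'i₂ : x' i₂ = v₂ := by funext j; simp [hx', hne.symm, Ne.symm hne]
  have hx'other : ∀ i, i ≠ i₁ → i ≠ i₂ → x' i = x i := by
    intro i h1 h2; funext j; simp [hx', h1, h2]
  have hvsum : ∀ j, v₁ j + v₂ j = x i₁ j + x i₂ j := by
    intro j
    rcases eq_or_ne j j₀ with rfl | hj
    · simp only [hv₁, hv₂, if_pos rfl]; omega
    · simp only [hv₁, hv₂, if_neg hj]
      have := ht j; omega
  refine ⟨x', ?_, ?_, ?_, ?_, ?_⟩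
  · -- schedule
    intro j
    have := sum_two_update (fun i => x i j) i₁ i₂ hne (v₁ j) (v₂ j)
    have hxj := hx j
    have hv := hvsum j
    simp only [hx']
    omega
  · -- Phi
    have key : ∀ i : Fin m, ∑ j, (x' i j)^2
        = if i = i₁ then (∑ j, (v₁ j)^2) else if i = i₂ then (∑ j, (v₂ j)^2)
          else ∑ j, (x i j)^2 := by
      intro i
      rcases eq_or_ne i i₁ with rfl | h1
      · rw [if_pos rfl, hx'i₁]
      · rcases eq_or_ne i i₂ with rfl | h2
        · rw [if_neg h1, if_pos rfl, hx'i₂]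
        · rw [if_neg h1, if_neg h2, hx'other i h1 h2]
    have hsum := sum_two_update (fun i => ∑ j, (x i j)^2) i₁ i₂ hne
      (∑ j, (v₁ j)^2) (∑ j, (v₂ j)^2)
    have hPhi' : Phi x' + ((∑ j, (x i₁ j)^2) + (∑ j, (x i₂ j)^2))
        = Phi x + ((∑ j, (v₁ j)^2) + (∑ j, (v₂ j)^2)) := by
      unfold Phi
      rw [Finset.sum_congr rfl fun i _ => key i]
      exact hsum
    have hlt : (∑ j, ((v₁ j)^2 + (v₂ j)^2)) < ∑ j, ((x i₁ j)^2 + (x i₂ j)^2) := by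
      apply Finset.sum_lt_sum
      · intro j _
        rcases eq_or_ne j j₀ with rfl | hj
        · simp only [hv₁, hv₂, if_pos rfl]
          obtain ⟨k, hk⟩ : ∃ k, x i₁ j = k + s := ⟨x i₁ j - s, by omega⟩
          rw [hk]
          have hks : x i₂ j < k := by omega
          have : x i₁ j - s = k := by omega
          rw [show k + s - s = k by omega]
          nlinarith
        · simp only [hv₁, hv₂, if_neg hj]
          rcases hgap j with h0 | hle
          · simp [h0]
          · obtain ⟨e, he⟩ : ∃ e, x i₂ j = e + t j := ⟨x i₂ j - t j, by omega⟩
            rw [he, show e + t j - t j = e by omega]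
            have : x i₁ j ≤ e := by omega
            nlinarith
      · refine ⟨j₀, Finset.mem_univ j₀, ?_⟩
        simp only [hv₁, hv₂, if_pos rfl]
        obtain ⟨k, hk⟩ : ∃ k, x i₁ j₀ = k + s := ⟨x i₁ j₀ - s, by omega⟩
        rw [hk, show k + s - s = k by omega]
        have hks : x i₂ j₀ < k := by omega
        nlinarith
    rw [Finset.sum_add_distrib, Finset.sum_add_distrib] at hlt
    omega
  · -- load i₁
    unfold load
    rw [hx'i₁]
    have hpt : ∀ j, v₁ j * p j + (if j = j₀ then s * p j else 0)
        = x i₁ j * p j + t j * p j := by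
      intro j
      rcases eq_or_ne j j₀ with rfl | hj
      · simp only [hv₁, if_pos rfl, ht0, ite_true]
        rw [← add_mul, Nat.sub_add_cancel hsx]
        omega
      · simp only [hv₁, if_neg hj]
        rw [add_mul]
        omega
    have := Finset.sum_congr rfl fun j (_ : j ∈ Finset.univ) => hpt j
    rw [Finset.sum_add_distrib, Finset.sum_add_distrib,
      Finset.sum_ite_eq' Finset.univ j₀ (fun j => s * p j)] at this
    simp only [Finset.mem_univ, if_true] at this
    omega
  · -- load i₂
    unfold load
    rw [hx'i₂]
    have hpt : ∀ j, v₂ j * p j + t j * p j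
        = x i₂ j * p j + (if j = j₀ then s * p j else 0) := by
      intro j
      rcases eq_or_ne j j₀ with rfl | hj
      · simp only [hv₂, if_pos rfl, ht0, ite_true]
        rw [add_mul]
        omega
      · simp only [hv₂, if_neg hj]
        rw [← add_mul, Nat.sub_add_cancel (ht j)]
        omega
    have := Finset.sum_congr rfl fun j (_ : j ∈ Finset.univ) => hpt j
    rw [Finset.sum_add_distrib, Finset.sum_add_distrib,
      Finset.sum_ite_eq' Finset.univ j₀ (fun j => s * p j)] at this
    simp only [Finset.mem_univ, if_true] at this
    omega
  · intro i h1 h2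
    unfold load
    rw [hx'other i h1 h2]



end GapProof

open GapProof in
theorem exists_Cmax_minimizer_small_gap (d m : ℕ) (hd : 1 ≤ d) (hm : 1 ≤ m)
    (p : Fin d → ℕ) (hp : ∀ j, 1 ≤ p j) (n : Fin d → ℕ) :
    ∃ xstar : Fin m → Fin d → ℕ, IsSchedule n xstar ∧
      (∀ x : Fin m → Fin d → ℕ, IsSchedule n x → Cmax p xstar ≤ Cmax p x) ∧
      ∀ (i₁ i₂ : Fin m) (j : Fin d), xstar i₁ j ≤ xstar i₂ j + Finset.univ.sup p := by
  classical
  set pmax := Finset.univ.sup p with hpmaxdef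
  have hpm : ∀ j, p j ≤ pmax := fun j => Finset.le_sup (Finset.mem_univ j)
  have hpmax1 : 1 ≤ pmax := le_trans (hp ⟨0, hd⟩) (hpm ⟨0, hd⟩)
  set K : ℕ := m * (∑ j, (n j)^2) + 1 with hK
  have hxle : ∀ x : Fin m → Fin d → ℕ, IsSchedule n x → ∀ i j, x i j ≤ n j := by
    intro x hx i j
    rw [← hx j]
    exact Finset.single_le_sum (f := fun i => x i j) (fun i _ => Nat.zero_le _) (Finset.mem_univ i)
  have hPhi_lt : ∀ x : Fin m → Fin d → ℕ, IsSchedule n x → Phi x < K := by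
    intro x hx
    have h1 : Phi x ≤ ∑ _i : Fin m, ∑ j, (n j)^2 := by
      apply Finset.sum_le_sum; intro i _
      apply Finset.sum_le_sum; intro j _
      exact Nat.pow_le_pow_left (hxle x hx i j) 2
    have h2 : ∑ _i : Fin m, ∑ j, (n j)^2 = m * ∑ j, (n j)^2 := by
      rw [Finset.sum_const, Finset.card_univ, Fintype.card_fin, smul_eq_mul]
    omega
  set S : Set ℕ :=
    {v | ∃ x : Fin m → Fin d → ℕ, IsSchedule n x ∧ K * Cmax p x + Phi x = v} with hS
  have hSne : S.Nonempty := by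
    refine ⟨_, (fun i j => if i = (⟨0, hm⟩ : Fin m) then n j else 0), ?_, rfl⟩
    intro j
    rw [Finset.sum_ite_eq' Finset.univ (⟨0, hm⟩ : Fin m) (fun _ => n j)]
    simp
  obtain ⟨xstar, hsched, hval⟩ := Nat.sInf_mem hSne
  have hmin : ∀ x : Fin m → Fin d → ℕ, IsSchedule n x →
      K * Cmax p xstar + Phi xstar ≤ K * Cmax p x + Phi x := by
    intro x hx
    rw [hval]
    exact Nat.sInf_le ⟨x, hx, rfl⟩
  have hCm : ∀ i : Fin m, load p xstar i ≤ Cmax p xstar :=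
    fun i => Finset.le_sup (Finset.mem_univ i)
  refine ⟨xstar, hsched, ?_, ?_⟩
  · intro x hx
    by_contra hlt
    push_neg at hlt
    have h1 := hmin x hx
    have h2 := hPhi_lt x hx
    have h3 : K * (Cmax p x + 1) ≤ K * Cmax p xstar := Nat.mul_le_mul (le_refl K) hlt
    have h4 : K * (Cmax p x + 1) = K * Cmax p x + K := by ring
    omega
  · by_contra hgapc
    push_neg at hgapc
    obtain ⟨i₁, i₂, j₀, hgap⟩ := hgapc
    have hne : i₁ ≠ i₂ := by rintro rfl; omega
    have himp : ∃ x' : Fin m → Fin d → ℕ, IsSchedule n x' ∧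
        Cmax p x' ≤ Cmax p xstar ∧ Phi x' < Phi xstar := by
      by_cases hcase : load p xstar i₂ + p j₀ ≤ load p xstar i₁
      · -- Case A: move one job of type j₀ from i₁ to i₂
        obtain ⟨x', hx's, hPhi, hl1, hl2, hlo⟩ :=
          improve p n xstar hsched i₁ i₂ hne j₀ 1 (fun _ => 0) le_rfl
            (by omega) (fun j => Nat.zero_le _) rfl
            (fun j => Or.inl rfl) (by omega)
        have hts0 : ∑ j, (fun _ : Fin d => 0) j * p j = 0 := by simp
        rw [hts0] at hl1 hl2
        refine ⟨x', hx's, ?_, hPhi⟩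
        apply Finset.sup_le
        intro i _
        rcases eq_or_ne i i₁ with rfl | h1
        · have := hCm i; omega
        · rcases eq_or_ne i i₂ with rfl | h2
          · have := hCm i₁; omega
          · rw [hlo i h1 h2]; exact hCm i
      · -- Case B: load-preserving swap
        push_neg at hcase
        set c : Fin d → ℕ := fun j => xstar i₂ j - xstar i₁ j with hc
        have hcsum : pmax * p j₀ < ∑ j, c j * p j := by
          have key : ∀ j : Fin d,
              (xstar i₂ j : ℤ) * p j + (if j = j₀ then ((pmax : ℤ) + 1) * p j₀ else 0)
              ≤ (xstar i₁ j : ℤ) * p j + (c j : ℤ) * p j := by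
            intro j
            rcases eq_or_ne j j₀ with rfl | hj
            · rw [if_pos rfl]
              have h1 : (xstar i₂ j : ℤ) + pmax + 1 ≤ xstar i₁ j := by
                exact_mod_cast hgap
              have h2 : (0 : ℤ) ≤ (c j : ℤ) * p j := by positivity
              have h3 : (0 : ℤ) ≤ (p j : ℤ) := by positivity
              nlinarith
            · rw [if_neg hj]
              have h1 : xstar i₂ j ≤ xstar i₁ j + c j := by
                simp only [hc]; omega
              have h1' : (xstar i₂ j : ℤ) ≤ (xstar i₁ j : ℤ) + c j := by exact_mod_cast h1
              have h3 : (0 : ℤ) ≤ (p j : ℤ) := by positivity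
              nlinarith
          have hsumkey := Finset.sum_le_sum (fun j (_ : j ∈ Finset.univ) => key j)
          rw [Finset.sum_add_distrib, Finset.sum_add_distrib,
            Finset.sum_ite_eq' Finset.univ j₀ (fun _ => ((pmax : ℤ) + 1) * p j₀)] at hsumkey
          simp only [Finset.mem_univ, if_true] at hsumkey
          have e1 : ((load p xstar i₁ : ℕ) : ℤ) = ∑ j, (xstar i₁ j : ℤ) * (p j : ℤ) := by
            unfold load; push_cast; ring
          have e2 : ((load p xstar i₂ : ℕ) : ℤ) = ∑ j, (xstar i₂ j : ℤ) * (p j : ℤ) := by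
            unfold load; push_cast; ring
          have ec : ((∑ j, c j * p j : ℕ) : ℤ) = ∑ j, (c j : ℤ) * (p j : ℤ) := by
            push_cast; ring
          have hload : ((load p xstar i₁ : ℕ) : ℤ) < (load p xstar i₂ : ℕ) + (p j₀ : ℤ) := by
            exact_mod_cast hcase
          have hfin : (pmax : ℤ) * p j₀ < ((∑ j, c j * p j : ℕ) : ℤ) := by
            rw [ec]
            rw [e1, e2] at hload
            linarith
          exact_mod_cast hfin
        obtain ⟨t, htc, s, hs1, hsP, hts⟩ :=
          exists_subsum_multiple p c pmax (p j₀) hp hpm (hp j₀) hcsum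
        have hc0 : c j₀ = 0 := by simp only [hc]; omega
        have ht0 : t j₀ = 0 := by have := htc j₀; omega
        obtain ⟨x', hx's, hPhi, hl1, hl2, hlo⟩ :=
          improve p n xstar hsched i₁ i₂ hne j₀ s t hs1
            (by omega)
            (fun j => le_trans (htc j) (by simp only [hc]; exact Nat.sub_le _ _))
            ht0
            (fun j => by
              rcases Nat.eq_zero_or_pos (t j) with h0 | h0
              · exact Or.inl h0
              · right
                have h1 := htc j
                simp only [hc] at h1
                omega)
            (by omega)
        rw [hts] at hl1 hl2
        refine ⟨x', hx's, ?_, hPhi⟩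
        apply Finset.sup_le
        intro i _
        rcases eq_or_ne i i₁ with rfl | h1
        · have := hCm i; omega
        · rcases eq_or_ne i i₂ with rfl | h2
          · have := hCm i; omega
          · rw [hlo i h1 h2]; exact hCm i
    obtain ⟨x', hx's, hC', hP'⟩ := himp
    have h1 := hmin x' hx's
    have h2 : K * Cmax p x' ≤ K * Cmax p xstar := Nat.mul_le_mul (le_refl K) hC'
    omega
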